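/- Let d ≥ 1, let H ∈ ℝ^{d×d} be positive definite, let c̃, k ∈ ℝ^d, let ν > 0, and let θ, θ̂ ∈ ℝ. Set σ² = (ν⁻¹ + c̃ᵀHc̃)⁻¹, A = H − σ²Hc̃c̃ᵀH, μ_b = A⁻¹(−k + σ²Hc̃(ν⁻¹θ + c̃ᵀk)), μ̄ = H⁻¹(−k + θ̂·Hc̃), τ = σ·Hc̃ (where σ = √σ²), and Δ = σ·(ν⁻¹θ + c̃ᵀk − θ̂/σ²). Then A is positive definite and there exists a constant C > 0, not depending on b, such that for all b ∈ ℝ^d: φ(b; μ_b, A⁻¹) = C · φ(b; μ̄, H⁻¹) · exp((1/2)(bᵀτ)² + Δ·(bᵀτ)). -/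

import Mathlib

open MeasureTheory Matrix Real

/-- Multivariate Gaussian density `φ(x; μ, S)` for covariance `S`. -/
noncomputable def mvGauss {d : ℕ} (S : Matrix (Fin d) (Fin d) ℝ) (μ x : Fin d → ℝ) : ℝ :=
  (2 * π) ^ (-(d : ℝ) / 2) * S.det ^ (-(1 : ℝ) / 2) *
    Real.exp (-(1 / 2) * ((x - μ) ⬝ᵥ (S⁻¹ *ᵥ (x - μ))))

lemma dot_symm {d : ℕ} (M : Matrix (Fin d) (Fin d) ℝ) (hM : Mᵀ = M) (x y : Fin d → ℝ) :
    x ⬝ᵥ M *ᵥ y = y ⬝ᵥ M *ᵥ x := by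
  rw [dotProduct_mulVec, ← mulVec_transpose, hM, dotProduct_comm]

lemma vecMulVec_mulVec' {d : ℕ} (c x : Fin d → ℝ) :
    vecMulVec c c *ᵥ x = (c ⬝ᵥ x) • c := by
  funext i
  simp [mulVec, vecMulVec_apply, dotProduct, Finset.sum_mul, Finset.mul_sum, mul_comm,
    mul_left_comm]

lemma quad_expand {d : ℕ} (M : Matrix (Fin d) (Fin d) ℝ) (hM : Mᵀ = M) (x y : Fin d → ℝ) :
    (x - y) ⬝ᵥ M *ᵥ (x - y) = x ⬝ᵥ M *ᵥ x - 2 * (x ⬝ᵥ M *ᵥ y) + y ⬝ᵥ M *ᵥ y := by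
  rw [mulVec_sub, dotProduct_sub, sub_dotProduct, sub_dotProduct, dot_symm M hM y x]
  ring

theorem stmt4 (d : ℕ) (hd : 1 ≤ d)
    (H : Matrix (Fin d) (Fin d) ℝ) (hH : H.PosDef)
    (c k : Fin d → ℝ) (ν : ℝ) (hν : 0 < ν) (θ θh : ℝ)
    (σ2 : ℝ) (hσ2 : σ2 = (ν⁻¹ + c ⬝ᵥ (H *ᵥ c))⁻¹)
    (A : Matrix (Fin d) (Fin d) ℝ)
    (hA : A = H - σ2 • (H * vecMulVec c c * H))
    (μb : Fin d → ℝ)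
    (hμb : μb = A⁻¹ *ᵥ (-k + (σ2 * (ν⁻¹ * θ + c ⬝ᵥ k)) • (H *ᵥ c)))
    (μbar : Fin d → ℝ)
    (hμbar : μbar = H⁻¹ *ᵥ (-k + θh • (H *ᵥ c)))
    (τ : Fin d → ℝ) (hτ : τ = Real.sqrt σ2 • (H *ᵥ c))
    (Δ : ℝ) (hΔ : Δ = Real.sqrt σ2 * (ν⁻¹ * θ + c ⬝ᵥ k - θh / σ2)) :
    A.PosDef ∧
      ∃ C : ℝ, 0 < C ∧ ∀ b : Fin d → ℝ,
        mvGauss A⁻¹ μb b =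
          C * (mvGauss H⁻¹ μbar b *
            Real.exp ((1 / 2) * (b ⬝ᵥ τ) ^ 2 + Δ * (b ⬝ᵥ τ))) := by
  have hHt : Hᵀ = H := by
    have h := hH.1.eq
    rwa [conjTranspose_eq_transpose_of_trivial] at h
  have hsymH := dot_symm H hHt
  have hq : 0 ≤ c ⬝ᵥ H *ᵥ c := by simpa using hH.posSemidef.dotProduct_mulVec_nonneg c
  have hden : 0 < ν⁻¹ + c ⬝ᵥ H *ᵥ c := add_pos_of_pos_of_nonneg (inv_pos.2 hν) hq
  have hσpos : 0 < σ2 := hσ2 ▸ inv_pos.2 hden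
  have hσ1 : σ2 * (ν⁻¹ + c ⬝ᵥ H *ᵥ c) = 1 := by
    rw [hσ2]; exact inv_mul_cancel₀ hden.ne'
  -- quadratic form of A
  have hquadA : ∀ x y : Fin d → ℝ,
      x ⬝ᵥ A *ᵥ y = x ⬝ᵥ H *ᵥ y - σ2 * ((x ⬝ᵥ H *ᵥ c) * (c ⬝ᵥ H *ᵥ y)) := by
    intro x y
    have h1 : (H * vecMulVec c c * H) *ᵥ y = (c ⬝ᵥ H *ᵥ y) • (H *ᵥ c) := by
      rw [Matrix.mul_assoc, ← mulVec_mulVec, ← mulVec_mulVec, vecMulVec_mulVec', mulVec_smul]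
    rw [hA, sub_mulVec, smul_mulVec, h1, dotProduct_sub, dotProduct_smul,
      dotProduct_smul]
    simp only [smul_eq_mul]
    ring
  -- symmetry of A
  have hWt : (vecMulVec c c)ᵀ = vecMulVec c c := by
    ext i j; simp [vecMulVec_apply, mul_comm]
  have hAt : Aᵀ = A := by
    rw [hA, transpose_sub, transpose_smul, transpose_mul, transpose_mul, hWt, hHt,
      Matrix.mul_assoc]
  -- A is positive definite
  have hApd : A.PosDef := by
    rw [posDef_iff_dotProduct_mulVec]
    constructor
    · show Aᴴ = A
      rwa [conjTranspose_eq_transpose_of_trivial]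
    · intro x hx
      have hsx : star x = x := by funext i; simp
      set s := x ⬝ᵥ H *ᵥ c with hs
      set y := x - (σ2 * s) • c with hydef
      have hy : y ⬝ᵥ H *ᵥ y
          = x ⬝ᵥ H *ᵥ x - 2 * ((σ2 * s) * s) + (σ2 * s) ^ 2 * (c ⬝ᵥ H *ᵥ c) := by
        rw [hydef, quad_expand H hHt]
        simp only [mulVec_smul, dotProduct_smul, smul_dotProduct, smul_eq_mul]
        ring
      have key : star x ⬝ᵥ A *ᵥ x = y ⬝ᵥ H *ᵥ y + ν⁻¹ * σ2 ^ 2 * s ^ 2 := by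
        rw [hsx, hquadA x x, hsymH c x, ← hs, hy]
        linear_combination (-σ2 * s ^ 2) * hσ1
      by_cases hy0 : y = 0
      · have hs0 : s ≠ 0 := by
          intro h0
          apply hx
          have hxval : x = (σ2 * s) • c := by
            have := sub_eq_zero.mp hy0
            exact this
          rw [hxval, h0]
          simp
        rw [key, hy0]
        have : (0 : Fin d → ℝ) ⬝ᵥ H *ᵥ (0 : Fin d → ℝ) = 0 := by simp
        rw [this, zero_add]
        positivity
      · rw [key]
        have h1 : 0 < y ⬝ᵥ H *ᵥ y := by simpa using hH.dotProduct_mulVec_pos hy0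
        have h2 : 0 ≤ ν⁻¹ * σ2 ^ 2 * s ^ 2 := by positivity
        linarith
  refine ⟨hApd, ?_⟩
  have hdA : IsUnit A.det := hApd.det_pos.ne'.isUnit
  have hdH : IsUnit H.det := hH.det_pos.ne'.isUnit
  have hAinv : A⁻¹⁻¹ = A := nonsing_inv_nonsing_inv _ hdA
  have hHinv : H⁻¹⁻¹ = H := nonsing_inv_nonsing_inv _ hdH
  have hdAinv : 0 < A⁻¹.det := by
    rw [det_nonsing_inv, Ring.inverse_eq_inv']
    exact inv_pos.2 hApd.det_pos
  have hdHinv : 0 < H⁻¹.det := by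
    rw [det_nonsing_inv, Ring.inverse_eq_inv']
    exact inv_pos.2 hH.det_pos
  set m := σ2 * (ν⁻¹ * θ + c ⬝ᵥ k) with hm
  have hAμb : A *ᵥ μb = -k + m • (H *ᵥ c) := by
    rw [hμb, mulVec_mulVec, mul_nonsing_inv _ hdA, one_mulVec]
  have hHμbar : H *ᵥ μbar = -k + θh • (H *ᵥ c) := by
    rw [hμbar, mulVec_mulVec, mul_nonsing_inv _ hdH, one_mulVec]
  have hss : Real.sqrt σ2 * Real.sqrt σ2 = σ2 := Real.mul_self_sqrt hσpos.le
  have hDs : Δ * Real.sqrt σ2 = m - θh := by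
    have h1 : Δ * Real.sqrt σ2
        = (Real.sqrt σ2 * Real.sqrt σ2) * (ν⁻¹ * θ + c ⬝ᵥ k - θh / σ2) := by
      rw [hΔ]; ring
    rw [h1, hss, hm]
    field_simp
  refine ⟨A⁻¹.det ^ (-(1 : ℝ) / 2) * (H⁻¹.det ^ (-(1 : ℝ) / 2))⁻¹ *
      Real.exp ((1 / 2) * (μbar ⬝ᵥ H *ᵥ μbar) - (1 / 2) * (μb ⬝ᵥ A *ᵥ μb)), ?_, ?_⟩
  · have p1 : (0 : ℝ) < A⁻¹.det ^ (-(1 : ℝ) / 2) := Real.rpow_pos_of_pos hdAinv _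
    have p2 : (0 : ℝ) < H⁻¹.det ^ (-(1 : ℝ) / 2) := Real.rpow_pos_of_pos hdHinv _
    positivity
  · intro b
    have hbAμ : b ⬝ᵥ A *ᵥ μb = b ⬝ᵥ (-k) + m * (b ⬝ᵥ H *ᵥ c) := by
      rw [hAμb, dotProduct_add, dotProduct_smul, smul_eq_mul]
    have hbHμ : b ⬝ᵥ H *ᵥ μbar = b ⬝ᵥ (-k) + θh * (b ⬝ᵥ H *ᵥ c) := by
      rw [hHμbar, dotProduct_add, dotProduct_smul, smul_eq_mul]
    have hbτ : b ⬝ᵥ τ = Real.sqrt σ2 * (b ⬝ᵥ H *ᵥ c) := by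
      rw [hτ, dotProduct_smul, smul_eq_mul]
    have hexp : -(1 / 2 : ℝ) * ((b - μb) ⬝ᵥ A *ᵥ (b - μb)) =
        ((1 / 2) * (μbar ⬝ᵥ H *ᵥ μbar) - (1 / 2) * (μb ⬝ᵥ A *ᵥ μb))
          + (-(1 / 2) * ((b - μbar) ⬝ᵥ H *ᵥ (b - μbar)))
          + ((1 / 2) * (b ⬝ᵥ τ) ^ 2 + Δ * (b ⬝ᵥ τ)) := by
      rw [quad_expand A hAt, quad_expand H hHt, hbAμ, hbHμ, hbτ, hquadA b b, hsymH c b]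
      rw [mul_pow, sq (Real.sqrt σ2), hss, ← mul_assoc Δ, hDs]
      ring
    show (2 * π) ^ (-(d : ℝ) / 2) * A⁻¹.det ^ (-(1 : ℝ) / 2) *
        Real.exp (-(1 / 2) * ((b - μb) ⬝ᵥ (A⁻¹⁻¹ *ᵥ (b - μb)))) = _
    rw [hAinv]
    show _ = _ * ((2 * π) ^ (-(d : ℝ) / 2) * H⁻¹.det ^ (-(1 : ℝ) / 2) *
        Real.exp (-(1 / 2) * ((b - μbar) ⬝ᵥ (H⁻¹⁻¹ *ᵥ (b - μbar)))) * _)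
    rw [hHinv]
    set P := (2 * π) ^ (-(d : ℝ) / 2) with hP
    set dA := A⁻¹.det ^ (-(1 : ℝ) / 2) with hdAdef
    set dHv := H⁻¹.det ^ (-(1 : ℝ) / 2) with hdHdef
    have hdH0 : dHv ≠ 0 := (Real.rpow_pos_of_pos hdHinv _).ne'
    rw [hexp, Real.exp_add, Real.exp_add]
    field_simp
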